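/- (Lemma 6.5.) Fix μ > 0. The supremum over tuples x in R_ach,rate of the infimum over λ ≥ 0 and α ≥ 0 of L₁(x, λ, α) is less than or equal to the supremum over tuples x in R_ach,rate of the infimum over λ₁ ≥ 0 and λ₂ ≥ 0 of L(x, λ₁, λ₂) (both in the extended reals). -/

import Mathlib

open Matrix Filter
open scoped ComplexOrder

noncomputable section

/-- `Mat m n` : complex `m × n` matrix. -/
abbrev Mat (m n : ℕ) := Matrix (Fin m) (Fin n) ℂ

/-- `LD M = log det (I + M)` (real part of the determinant). -/
def LD {ι : Type*} [Fintype ι] [DecidableEq ι] (M : Matrix ι ι ℂ) : ℝ :=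
  Real.log ((1 + M).det.re)

/-- real trace. -/
def rTr {ι : Type*} [Fintype ι] (M : Matrix ι ι ℂ) : ℝ := M.trace.re

/-- `G = [H_pp  H_cp]`. -/
def Gmat {npt nct npr : ℕ} (Hpp : Mat npr npt) (Hcp : Mat npr nct) :
    Matrix (Fin npr) (Fin npt ⊕ Fin nct) ℂ :=
  fromCols Hpp Hcp

/-- `G_α = [H_pp  H_cp/√α]`. -/
def Galpha {npt nct npr : ℕ} (Hpp : Mat npr npt) (Hcp : Mat npr nct) (α : ℝ) :
    Matrix (Fin npr) (Fin npt ⊕ Fin nct) ℂ :=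
  fromCols Hpp (((Real.sqrt α : ℂ))⁻¹ • Hcp)

/-- The achievable region `R_in`. -/
def Rin {npt nct npr ncr : ℕ} (Hpp : Mat npr npt) (Hcp : Mat npr nct) (Hcc : Mat ncr nct)
    (Pp Pc : ℝ) : Set (ℝ × ℝ) :=
  closure (convexHull ℝ
    {R : ℝ × ℝ | 0 ≤ R.1 ∧ 0 ≤ R.2 ∧
      ∃ (Sp : Mat npt npt) (Scp Scc : Mat nct nct) (Q : Mat npt nct),
        Sp.PosSemidef ∧ Scp.PosSemidef ∧ Scc.PosSemidef ∧
        (fromBlocks Sp Q Qᴴ Scp).PosSemidef ∧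
        rTr Sp ≤ Pp ∧ rTr Scp + rTr Scc ≤ Pc ∧
        R.1 ≤ LD (Gmat Hpp Hcp * fromBlocks Sp Q Qᴴ Scp * (Gmat Hpp Hcp)ᴴ
                  + Hcp * Scc * Hcpᴴ)
              - LD (Hcp * Scc * Hcpᴴ) ∧
        R.2 ≤ LD (Hcc * Scc * Hccᴴ)})

/-- The partial outer bound region `R_part,out^α`. -/
def Rpart {npt nct npr ncr : ℕ} (Hpp : Mat npr npt) (Hcp : Mat npr nct) (Hcc : Mat ncr nct)
    (Pp Pc : ℝ) (α : ℝ) : Set (ℝ × ℝ) :=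
  closure (convexHull ℝ
    {R : ℝ × ℝ | 0 ≤ R.1 ∧ 0 ≤ R.2 ∧
      ∃ (Qp : Matrix (Fin npt ⊕ Fin nct) (Fin npt ⊕ Fin nct) ℂ) (Scc : Mat nct nct),
        Qp.PosSemidef ∧ Scc.PosSemidef ∧
        rTr Qp + rTr Scc ≤ Pp + α * Pc ∧
        R.1 ≤ LD (Galpha Hpp Hcp α * Qp * (Galpha Hpp Hcp α)ᴴ
                  + ((α : ℂ))⁻¹ • (Hcp * Scc * Hcpᴴ))
              - LD (((α : ℂ))⁻¹ • (Hcp * Scc * Hcpᴴ)) ∧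
        R.2 ≤ LD (((α : ℂ))⁻¹ • (Hcc * Scc * Hccᴴ))})

/-- Tuples in `R_ach,rate` (no power constraints). -/
def RachRate {npt nct npr ncr : ℕ} (Hpp : Mat npr npt) (Hcp : Mat npr nct) (Hcc : Mat ncr nct)
    (Rp Rc : ℝ) (Sp : Mat npt npt) (Scp Scc : Mat nct nct) (Q : Mat npt nct) : Prop :=
  0 ≤ Rp ∧ 0 ≤ Rc ∧ Sp.PosSemidef ∧ Scp.PosSemidef ∧ Scc.PosSemidef ∧
  (fromBlocks Sp Q Qᴴ Scp).PosSemidef ∧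
  Rp ≤ LD (Gmat Hpp Hcp * fromBlocks Sp Q Qᴴ Scp * (Gmat Hpp Hcp)ᴴ + Hcp * Scc * Hcpᴴ)
        - LD (Hcp * Scc * Hcpᴴ) ∧
  Rc ≤ LD (Hcc * Scc * Hccᴴ)

/-- The Lagrangian `L`. -/
def Lfun {npt nct : ℕ} (Pp Pc μ Rp Rc : ℝ) (Sp : Mat npt npt) (Scp Scc : Mat nct nct)
    (l1 l2 : ℝ) : ℝ :=
  μ * Rp + Rc - l1 * (rTr Sp - Pp) - l2 * (rTr Scp + rTr Scc - Pc)

/-- The Lagrangian `L₁`. -/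
def L1fun {npt nct : ℕ} (Pp Pc μ Rp Rc : ℝ) (Sp : Mat npt npt) (Scp Scc : Mat nct nct)
    (l α : ℝ) : ℝ :=
  μ * Rp + Rc - l * (rTr Sp + α * rTr Scp + α * rTr Scc - Pp - α * Pc)

/-- `K = [0  H_cc/√α]`. -/
def Kmat (npt : ℕ) {nct ncr : ℕ} (Hcc : Mat ncr nct) (α : ℝ) :
    Matrix (Fin ncr) (Fin npt ⊕ Fin nct) ℂ :=
  fromCols 0 (((Real.sqrt α : ℂ))⁻¹ • Hcc)

/-- `K̄ = [[H_pp, H_cp/√α],[0, H_cc/√α]]`. -/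
def Kbar {npt nct npr ncr : ℕ} (Hpp : Mat npr npt) (Hcp : Mat npr nct) (Hcc : Mat ncr nct)
    (α : ℝ) : Matrix (Fin npr ⊕ Fin ncr) (Fin npt ⊕ Fin nct) ℂ :=
  fromBlocks Hpp (((Real.sqrt α : ℂ))⁻¹ • Hcp) 0 (((Real.sqrt α : ℂ))⁻¹ • Hcc)

/-- The region `R₁^α` (licensed user encoded first). -/
def R1reg {npt nct npr ncr : ℕ} (Hpp : Mat npr npt) (Hcp : Mat npr nct) (Hcc : Mat ncr nct)
    (Pp Pc : ℝ) (α : ℝ) : Set (ℝ × ℝ) :=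
  closure (convexHull ℝ
    {R : ℝ × ℝ | 0 ≤ R.1 ∧ 0 ≤ R.2 ∧
      ∃ Qp Qc : Matrix (Fin npt ⊕ Fin nct) (Fin npt ⊕ Fin nct) ℂ,
        Qp.PosSemidef ∧ Qc.PosSemidef ∧ rTr Qp + rTr Qc ≤ Pp + α * Pc ∧
        R.1 ≤ LD (Galpha Hpp Hcp α * Qp * (Galpha Hpp Hcp α)ᴴ
                  + Galpha Hpp Hcp α * Qc * (Galpha Hpp Hcp α)ᴴ)
              - LD (Galpha Hpp Hcp α * Qc * (Galpha Hpp Hcp α)ᴴ) ∧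
        R.2 ≤ LD (Kmat npt Hcc α * Qc * (Kmat npt Hcc α)ᴴ)})

/-- The region `R₂^α` (cognitive user encoded first). -/
def R2reg {npt nct npr ncr : ℕ} (Hpp : Mat npr npt) (Hcp : Mat npr nct) (Hcc : Mat ncr nct)
    (Pp Pc : ℝ) (α : ℝ) : Set (ℝ × ℝ) :=
  closure (convexHull ℝ
    {R : ℝ × ℝ | 0 ≤ R.1 ∧ 0 ≤ R.2 ∧
      ∃ Qp Qc : Matrix (Fin npt ⊕ Fin nct) (Fin npt ⊕ Fin nct) ℂ,
        Qp.PosSemidef ∧ Qc.PosSemidef ∧ rTr Qp + rTr Qc ≤ Pp + α * Pc ∧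
        R.1 ≤ LD (Galpha Hpp Hcp α * Qp * (Galpha Hpp Hcp α)ᴴ) ∧
        R.2 ≤ LD (Kmat npt Hcc α * Qp * (Kmat npt Hcc α)ᴴ
                  + Kmat npt Hcc α * Qc * (Kmat npt Hcc α)ᴴ)
              - LD (Kmat npt Hcc α * Qp * (Kmat npt Hcc α)ᴴ)})

/-- The dirty-paper-coding region `D^α`. -/
def Dreg {npt nct npr ncr : ℕ} (Hpp : Mat npr npt) (Hcp : Mat npr nct) (Hcc : Mat ncr nct)
    (Pp Pc : ℝ) (α : ℝ) : Set (ℝ × ℝ) :=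
  closure (convexHull ℝ
    (R1reg Hpp Hcp Hcc Pp Pc α ∪ R2reg Hpp Hcp Hcc Pp Pc α))

/-- `Σ_z = [[I, Q_z],[Q_z†, I]]`. -/
def Sigmaz {npr ncr : ℕ} (Qz : Mat npr ncr) :
    Matrix (Fin npr ⊕ Fin ncr) (Fin npr ⊕ Fin ncr) ℂ :=
  fromBlocks 1 Qz Qzᴴ 1

/-- The outer bound region `R_out^{α,Σ_z}`. -/
def Rout {npt nct npr ncr : ℕ} (Hpp : Mat npr npt) (Hcp : Mat npr nct) (Hcc : Mat ncr nct)
    (Pp Pc : ℝ) (α : ℝ) (Qz : Mat npr ncr) : Set (ℝ × ℝ) :=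
  closure (convexHull ℝ
    {R : ℝ × ℝ | 0 ≤ R.1 ∧ 0 ≤ R.2 ∧
      ∃ Qp Qc : Matrix (Fin npt ⊕ Fin nct) (Fin npt ⊕ Fin nct) ℂ,
        Qp.PosSemidef ∧ Qc.PosSemidef ∧ rTr Qp + rTr Qc ≤ Pp + α * Pc ∧
        R.1 ≤ LD (Galpha Hpp Hcp α * Qp * (Galpha Hpp Hcp α)ᴴ
                  + Galpha Hpp Hcp α * Qc * (Galpha Hpp Hcp α)ᴴ)
              - LD (Galpha Hpp Hcp α * Qc * (Galpha Hpp Hcp α)ᴴ) ∧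
        R.2 ≤ Real.log ((Sigmaz Qz + Kbar Hpp Hcp Hcc α * Qc * (Kbar Hpp Hcp Hcc α)ᴴ).det.re)
              - Real.log ((Sigmaz Qz).det.re)})

lemma rTr_nonneg_of_psd {ι : Type*} [Fintype ι] [DecidableEq ι] {M : Matrix ι ι ℂ}
    (hM : M.PosSemidef) : 0 ≤ rTr M := by
  have h : ∀ i, 0 ≤ (M i i).re := by
    intro i
    have h2 := hM.dotProduct_mulVec_nonneg (Pi.single i 1)
    have : star (Pi.single i 1 : ι → ℂ) ⬝ᵥ M *ᵥ Pi.single i 1 = M i i := by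
      simp [Matrix.mulVec_single_one, dotProduct, Pi.single_apply, apply_ite (star : ℂ → ℂ)]
    rw [this] at h2
    exact (Complex.le_def.mp h2).1
  have : rTr M = ∑ i, (M i i).re := by
    simp [rTr, Matrix.trace, Matrix.diag, Complex.re_sum]
  rw [this]
  exact Finset.sum_nonneg fun i _ => h i

theorem statement5 {npt nct npr ncr : ℕ}
    (hnpt : 0 < npt) (hnct : 0 < nct) (hnpr : 0 < npr) (hncr : 0 < ncr)
    (Hpp : Mat npr npt) (Hcp : Mat npr nct) (Hcc : Mat ncr nct)
    (Pp Pc : ℝ) (hPp : 0 < Pp) (hPc : 0 < Pc) (μ : ℝ) (hμ : 0 < μ) :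
    (⨆ Rp : ℝ, ⨆ Rc : ℝ, ⨆ Sp : Mat npt npt, ⨆ Scp : Mat nct nct, ⨆ Scc : Mat nct nct,
      ⨆ Q : Mat npt nct,
      ⨆ _ : RachRate Hpp Hcp Hcc Rp Rc Sp Scp Scc Q,
        ⨅ l ∈ Set.Ici (0 : ℝ), ⨅ α ∈ Set.Ici (0 : ℝ),
          ((L1fun Pp Pc μ Rp Rc Sp Scp Scc l α : ℝ) : EReal)) ≤
    (⨆ Rp : ℝ, ⨆ Rc : ℝ, ⨆ Sp : Mat npt npt, ⨆ Scp : Mat nct nct, ⨆ Scc : Mat nct nct,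
      ⨆ Q : Mat npt nct,
      ⨆ _ : RachRate Hpp Hcp Hcc Rp Rc Sp Scp Scc Q,
        ⨅ l1 ∈ Set.Ici (0 : ℝ), ⨅ l2 ∈ Set.Ici (0 : ℝ),
          ((Lfun Pp Pc μ Rp Rc Sp Scp Scc l1 l2 : ℝ) : EReal)) := by
  refine iSup_mono fun Rp => iSup_mono fun Rc => iSup_mono fun Sp => iSup_mono fun Scp =>
    iSup_mono fun Scc => iSup_mono fun Q => iSup_mono fun h => ?_
  have hSp : (0:ℝ) ≤ rTr Sp := rTr_nonneg_of_psd h.2.2.1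
  refine le_iInf₂ fun l1 hl1 => le_iInf₂ fun l2 hl2 => ?_
  simp only [Set.mem_Ici] at hl1 hl2
  refine le_of_forall_gt_imp_ge_of_dense fun a ha => ?_
  obtain ⟨c, hc1, hc2⟩ := EReal.lt_iff_exists_real_btwn.mp ha
  have hce : Lfun Pp Pc μ Rp Rc Sp Scp Scc l1 l2 < c := EReal.coe_lt_coe_iff.mp hc1
  set e := Lfun Pp Pc μ Rp Rc Sp Scp Scc l1 l2 with he
  set δ : ℝ := (c - e) / Pp with hδdef
  have hδ : 0 < δ := div_pos (by linarith) hPp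
  have hl : 0 < l1 + δ := by linarith
  have hα : (0:ℝ) ≤ l2 / (l1 + δ) := div_nonneg hl2 hl.le
  have key : L1fun Pp Pc μ Rp Rc Sp Scp Scc (l1 + δ) (l2 / (l1 + δ))
      = e + δ * Pp - δ * rTr Sp := by
    have hmul : (l1 + δ) * (l2 / (l1 + δ)) = l2 := by
      field_simp
    simp only [L1fun, he, Lfun]
    have : (l1 + δ) * (rTr Sp + l2 / (l1 + δ) * rTr Scp + l2 / (l1 + δ) * rTr Scc
        - Pp - l2 / (l1 + δ) * Pc)
        = (l1 + δ) * rTr Sp + l2 * rTr Scp + l2 * rTr Scc - (l1 + δ) * Pp - l2 * Pc := by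
      field_simp
    rw [this]; ring
  have hval : L1fun Pp Pc μ Rp Rc Sp Scp Scc (l1 + δ) (l2 / (l1 + δ)) ≤ c := by
    rw [key]
    have : δ * Pp = c - e := by
      rw [hδdef]; field_simp
    nlinarith [mul_nonneg hδ.le hSp]
  calc (⨅ l ∈ Set.Ici (0:ℝ), ⨅ α ∈ Set.Ici (0:ℝ),
        ((L1fun Pp Pc μ Rp Rc Sp Scp Scc l α : ℝ) : EReal))
      ≤ ((L1fun Pp Pc μ Rp Rc Sp Scp Scc (l1 + δ) (l2 / (l1 + δ)) : ℝ) : EReal) := by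
        refine iInf₂_le_of_le (l1 + δ) (Set.mem_Ici.mpr (by linarith)) ?_
        exact iInf₂_le_of_le (l2 / (l1 + δ)) (Set.mem_Ici.mpr hα) le_rfl
    _ ≤ ((c : ℝ) : EReal) := EReal.coe_le_coe_iff.mpr hval
    _ ≤ a := hc2.le

end
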